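/- (Lemma 1(a)) Let φ be the standard normal density and Φ the standard normal cdf. Fix z < 0. Then the function ν ↦ R(z,ν) = (φ(z−ν)·Φ(z+ν) − φ(z+ν)·Φ(z−ν)) / (φ(z+ν) − φ(z−ν)) is monotonically non-increasing on the set of ν > 0 with z < −ν/2 (i.e. for 0 < ν < −2z). -/

import Mathlib

open MeasureTheory Real

/-- The standard normal density φ(u) = exp(-u²/2)/√(2π). -/
noncomputable def stdNormalPdf (u : ℝ) : ℝ := Real.exp (-u ^ 2 / 2) / Real.sqrt (2 * Real.pi)

/-- The standard normal cdf Φ(z) = ∫_{-∞}^z φ(u) du. -/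
noncomputable def stdNormalCdf (z : ℝ) : ℝ := ∫ u in Set.Iic z, stdNormalPdf u

lemma stdNormalPdf_pos (u : ℝ) : 0 < stdNormalPdf u := by
  unfold stdNormalPdf
  have h : (0:ℝ) < Real.sqrt (2 * Real.pi) := Real.sqrt_pos.2 (by positivity)
  positivity

lemma continuous_stdNormalPdf : Continuous stdNormalPdf := by
  unfold stdNormalPdf
  fun_prop

lemma integrable_stdNormalPdf : Integrable stdNormalPdf := by
  have h : Integrable (fun u : ℝ => Real.exp (-(1/2 : ℝ) * u ^ 2)) :=
    integrable_exp_neg_mul_sq (by norm_num)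
  have h2 : stdNormalPdf = fun u : ℝ =>
      Real.exp (-(1/2 : ℝ) * u ^ 2) / Real.sqrt (2 * Real.pi) := by
    funext u
    unfold stdNormalPdf
    rw [show -u ^ 2 / 2 = -(1/2 : ℝ) * u ^ 2 by ring]
  rw [h2]
  exact h.div_const _

lemma hasDerivAt_stdNormalPdf (u : ℝ) :
    HasDerivAt stdNormalPdf (-u * stdNormalPdf u) u := by
  have h1 : HasDerivAt (fun x : ℝ => -x ^ 2 / 2) (-u) u := by
    have := ((hasDerivAt_pow 2 u).neg).div_const 2
    simpa using this.congr_deriv (by push_cast; ring)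
  have h2 : HasDerivAt (fun x : ℝ => Real.exp (-x ^ 2 / 2))
      (Real.exp (-u ^ 2 / 2) * (-u)) u := h1.exp
  have h3 := h2.div_const (Real.sqrt (2 * Real.pi))
  have : HasDerivAt stdNormalPdf (Real.exp (-u ^ 2 / 2) * (-u) / Real.sqrt (2 * Real.pi)) u := h3
  convert this using 1
  unfold stdNormalPdf
  ring

lemma hasDerivAt_stdNormalCdf (x : ℝ) : HasDerivAt stdNormalCdf (stdNormalPdf x) x := by
  have hint := integrable_stdNormalPdf
  have key : stdNormalCdf = fun y => stdNormalCdf 0 + ∫ t in (0:ℝ)..y, stdNormalPdf t := by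
    funext y
    have h := intervalIntegral.integral_Iic_sub_Iic (μ := volume) (f := stdNormalPdf)
      (a := (0:ℝ)) (b := y) hint.integrableOn hint.integrableOn
    unfold stdNormalCdf at h ⊢
    linarith
  have hd : HasDerivAt (fun y => ∫ t in (0:ℝ)..y, stdNormalPdf t) (stdNormalPdf x) x :=
    intervalIntegral.integral_hasDerivAt_right (hint.intervalIntegrable)
      (continuous_stdNormalPdf.stronglyMeasurableAtFilter _ _)
      continuous_stdNormalPdf.continuousAt
  rw [key]
  exact hd.const_add _

lemma stdNormalPdf_lt {z ν : ℝ} (hz : z < 0) (hν : 0 < ν) :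
    stdNormalPdf (z - ν) < stdNormalPdf (z + ν) := by
  unfold stdNormalPdf
  have h : (0:ℝ) < Real.sqrt (2 * Real.pi) := Real.sqrt_pos.2 (by positivity)
  have hexp : Real.exp (-(z - ν) ^ 2 / 2) < Real.exp (-(z + ν) ^ 2 / 2) :=
    Real.exp_lt_exp.2 (by nlinarith)
  exact div_lt_div_of_pos_right hexp h

/-- derivative of z+t and z-t -/
private lemma hasDerivAt_add_const (z t : ℝ) : HasDerivAt (fun s : ℝ => z + s) 1 t := by
  simpa using (hasDerivAt_id t).const_add z

private lemma hasDerivAt_sub_const (z t : ℝ) : HasDerivAt (fun s : ℝ => z - s) (-1) t := by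
  simpa using (hasDerivAt_id t).const_sub z

lemma U_nonpos {z : ℝ} (hz : z < 0) {ν : ℝ} (hν : 0 ≤ ν) :
    z * (stdNormalCdf (z + ν) - stdNormalCdf (z - ν)) +
      (stdNormalPdf (z + ν) - stdNormalPdf (z - ν)) ≤ 0 := by
  set U : ℝ → ℝ := fun t => z * (stdNormalCdf (z + t) - stdNormalCdf (z - t)) +
      (stdNormalPdf (z + t) - stdNormalPdf (z - t)) with hU
  have hderiv : ∀ t : ℝ, HasDerivAt U
      (-t * (stdNormalPdf (z + t) - stdNormalPdf (z - t))) t := by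
    intro t
    have hΦa := (hasDerivAt_stdNormalCdf (z + t)).comp t (hasDerivAt_add_const z t)
    have hΦb := (hasDerivAt_stdNormalCdf (z - t)).comp t (hasDerivAt_sub_const z t)
    have hφa := (hasDerivAt_stdNormalPdf (z + t)).comp t (hasDerivAt_add_const z t)
    have hφb := (hasDerivAt_stdNormalPdf (z - t)).comp t (hasDerivAt_sub_const z t)
    have h := ((hΦa.sub hΦb).const_mul z).add (hφa.sub hφb)
    exact h.congr_deriv (by ring)
  have hU0 : U 0 = 0 := by simp [hU]
  have hanti : AntitoneOn U (Set.Ici 0) := by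
    apply antitoneOn_of_deriv_nonpos (convex_Ici 0)
    · exact fun t _ => (hderiv t).continuousAt.continuousWithinAt
    · intro t ht
      exact (hderiv t).differentiableAt.differentiableWithinAt
    · intro t ht
      rw [interior_Ici] at ht
      rw [(hderiv t).deriv]
      have hlt : stdNormalPdf (z - t) < stdNormalPdf (z + t) := stdNormalPdf_lt hz ht
      nlinarith [(Set.mem_Ioi.mp ht).le]
  have := hanti Set.self_mem_Ici hν hν
  rw [hU0] at this
  exact this

/-- Lemma 1(a): for fixed z < 0, the relative value
R(z,ν) = (φ(z−ν)Φ(z+ν) − φ(z+ν)Φ(z−ν))/(φ(z+ν) − φ(z−ν)) is monotonically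
non-increasing in ν on the set {ν | 0 < ν ∧ z < −ν/2}. -/
theorem strangle_relative_value_antitoneOn_nu (z : ℝ) (hz : z < 0) :
    AntitoneOn
      (fun ν : ℝ =>
        (stdNormalPdf (z - ν) * stdNormalCdf (z + ν) -
            stdNormalPdf (z + ν) * stdNormalCdf (z - ν)) /
          (stdNormalPdf (z + ν) - stdNormalPdf (z - ν)))
      {ν : ℝ | 0 < ν ∧ z < -ν / 2} := by
  have hset : {ν : ℝ | 0 < ν ∧ z < -ν / 2} = Set.Ioo 0 (-(2 * z)) := by
    ext ν
    simp only [Set.mem_setOf_eq, Set.mem_Ioo]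
    constructor <;> rintro ⟨h1, h2⟩ <;> exact ⟨h1, by linarith⟩
  rw [hset]
  set F : ℝ → ℝ := fun ν =>
    (stdNormalPdf (z - ν) * stdNormalCdf (z + ν) -
        stdNormalPdf (z + ν) * stdNormalCdf (z - ν)) /
      (stdNormalPdf (z + ν) - stdNormalPdf (z - ν)) with hF
  have hderiv : ∀ ν : ℝ, 0 < ν → HasDerivAt F
      ((2 * stdNormalPdf (z + ν) * stdNormalPdf (z - ν)) *
        (z * (stdNormalCdf (z + ν) - stdNormalCdf (z - ν)) +
          (stdNormalPdf (z + ν) - stdNormalPdf (z - ν))) /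
        (stdNormalPdf (z + ν) - stdNormalPdf (z - ν)) ^ 2) ν := by
    intro ν hν
    have hΦa := (hasDerivAt_stdNormalCdf (z + ν)).comp ν (hasDerivAt_add_const z ν)
    have hΦb := (hasDerivAt_stdNormalCdf (z - ν)).comp ν (hasDerivAt_sub_const z ν)
    have hφa := (hasDerivAt_stdNormalPdf (z + ν)).comp ν (hasDerivAt_add_const z ν)
    have hφb := (hasDerivAt_stdNormalPdf (z - ν)).comp ν (hasDerivAt_sub_const z ν)
    have hN := (hφb.mul hΦa).sub (hφa.mul hΦb)
    have hD := hφa.sub hφb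
    have hDne : stdNormalPdf (z + ν) - stdNormalPdf (z - ν) ≠ 0 :=
      ne_of_gt (sub_pos.2 (stdNormalPdf_lt hz hν))
    have h := hN.div hD hDne
    exact h.congr_deriv (by simp only [Function.comp_apply, Pi.sub_apply, Pi.mul_apply]; field_simp; ring)
  apply antitoneOn_of_deriv_nonpos (convex_Ioo _ _)
  · exact fun ν hν => (hderiv ν hν.1).continuousAt.continuousWithinAt
  · intro ν hν
    rw [interior_Ioo] at hν
    exact (hderiv ν hν.1).differentiableAt.differentiableWithinAt
  · intro ν hν
    rw [interior_Ioo] at hν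
    rw [(hderiv ν hν.1).deriv]
    apply div_nonpos_of_nonpos_of_nonneg
    · have hU := U_nonpos hz hν.1.le
      have hpa := stdNormalPdf_pos (z + ν)
      have hpb := stdNormalPdf_pos (z - ν)
      have h2 : (0:ℝ) ≤ 2 * stdNormalPdf (z + ν) * stdNormalPdf (z - ν) := by positivity
      exact mul_nonpos_of_nonneg_of_nonpos h2 hU
    · positivity
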